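/- For every numeric planning problem Π and every total order < of the actions of Π, the R²∃ <-encoding Π^< dominates the standard encoding Π^S: for every bound n ≥ 0, if Π^S_n is satisfiable then Π^<_n is satisfiable; moreover, from any model of Π^S_n one can define a model of Π^<_n with the same corresponding plan. -/

import Mathlib

open scoped Classical

namespace PatternPlanning

/-! ## Numeric planning problems -/

/-- A linear expression `∑ w, coeff w * w + const` over the numeric variables `VN`. -/
structure LinExpr (VN : Type) where
  coeff : VN → ℚ
  const : ℚ

/-- Value of a linear expression under a numeric valuation. -/
def LinExpr.eval {VN : Type} [Fintype VN] (e : LinExpr VN) (ν : VN → ℚ) : ℚ :=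
  (∑ w, e.coeff w * ν w) + e.const

/-- The comparison operators `≥ , > , =` of numeric conditions `ψ ⊵ 0`. -/
inductive CompOp : Type
  | ge | gt | eq

/-- `op.holds q` means `q ⊵ 0`. -/
def CompOp.holds : CompOp → ℚ → Prop
  | .ge, q => 0 ≤ q
  | .gt, q => 0 < q
  | .eq, q => q = 0

/-- A numeric condition `ψ ⊵ 0`. -/
structure NumCond (VN : Type) where
  expr : LinExpr VN
  op : CompOp

def NumCond.holds {VN : Type} [Fintype VN] (c : NumCond VN) (ν : VN → ℚ) : Prop :=
  c.op.holds (c.expr.eval ν)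

/-- A propositional condition `v = ⊤` or `v = ⊥`. -/
inductive PropCond (VB : Type)
  | isTrue (v : VB)
  | isFalse (v : VB)

def PropCond.holds {VB : Type} : PropCond VB → (VB → Bool) → Prop
  | .isTrue v, β => β v = true
  | .isFalse v, β => β v = false

/-- An action: propositional and numeric preconditions, Boolean effects `v := ⊤/⊥`
and numeric effects `w := ψ` (each variable assigned at most once, enforced by
the functional representation of the effects). -/
structure Act (VB VN : Type) where
  preB : List (PropCond VB)
  preN : List (NumCond VN)
  effB : VB → Option Bool
  effN : VN → Option (LinExpr VN)

def Act.assignsB {VB VN : Type} (a : Act VB VN) (v : VB) : Prop := a.effB v ≠ none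
def Act.assignsN {VB VN : Type} (a : Act VB VN) (x : VN) : Prop := a.effN x ≠ none

/-- The effect `x := e` is a linear increment `x += ψ` : `e = x + ψ` with `ψ` not
containing any variable assigned by `a`. -/
def Act.isIncr {VB VN : Type} (a : Act VB VN) (x : VN) (e : LinExpr VN) : Prop :=
  e.coeff x = 1 ∧ ∀ y, a.assignsN y → y ≠ x → e.coeff y = 0

/-- The increment part `ψ` of a linear increment `x := x + ψ`. -/
noncomputable def incrPart {VN : Type} (e : LinExpr VN) (x : VN) : LinExpr VN :=
  ⟨Function.update e.coeff x 0, e.const⟩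

/-- The (general) assignment `x := e` is simple: `e` contains no variable assigned by `a`. -/
def Act.isSimpleA {VB VN : Type} (a : Act VB VN) (e : LinExpr VN) : Prop :=
  ∀ y, a.assignsN y → e.coeff y = 0

/-- An action is eligible for rolling. -/
def Act.eligible {VB VN : Type} (a : Act VB VN) : Prop :=
  (∀ v, PropCond.isFalse v ∈ a.preB → a.effB v ≠ some true) ∧
  (∀ v, PropCond.isTrue v ∈ a.preB → a.effB v ≠ some false) ∧
  (∀ x e, a.effN x = some e → a.isIncr x e ∨ a.isSimpleA e) ∧
  (∃ x e, a.effN x = some e ∧ a.isIncr x e)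

/-- A state: values of the Boolean and numeric variables. -/
structure PState (VB VN : Type) where
  boolVal : VB → Bool
  numVal : VN → ℚ

/-- `a` is executable in `s`: all preconditions of `a` hold in `s`. -/
def Act.execIn {VB VN : Type} [Fintype VN] (a : Act VB VN) (s : PState VB VN) : Prop :=
  (∀ c ∈ a.preB, c.holds s.boolVal) ∧ (∀ c ∈ a.preN, c.holds s.numVal)

/-- The result of executing `a` in `s`. -/
def Act.result {VB VN : Type} [Fintype VN] (a : Act VB VN) (s : PState VB VN) : PState VB VN where
  boolVal := fun v => (a.effB v).getD (s.boolVal v)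
  numVal := fun x =>
    match a.effN x with
    | none => s.numVal x
    | some e => e.eval s.numVal

/-- Execution of a sequence of actions: `some` of the last induced state if the
sequence is executable, `none` otherwise. -/
noncomputable def execSeq {VB VN A : Type} [Fintype VN] (acts : A → Act VB VN) :
    List A → PState VB VN → Option (PState VB VN)
  | [], s => some s
  | a :: rest, s =>
      if (acts a).execIn s then execSeq acts rest ((acts a).result s) else none

/-- Goal formulas: propositional combinations of propositional and numeric conditions. -/
inductive Formula (VB VN : Type)
  | prop (c : PropCond VB)
  | num (c : NumCond VN)
  | not (f : Formula VB VN)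
  | and (f g : Formula VB VN)
  | or (f g : Formula VB VN)

def Formula.holds {VB VN : Type} [Fintype VN] :
    Formula VB VN → (VB → Bool) → (VN → ℚ) → Prop
  | .prop c, β, _ => c.holds β
  | .num c, _, ν => c.holds ν
  | .not f, β, ν => ¬ f.holds β ν
  | .and f g, β, ν => f.holds β ν ∧ g.holds β ν
  | .or f g, β, ν => f.holds β ν ∨ g.holds β ν

/-- A numeric planning problem `Π = ⟨V_B, V_N, A, I, G⟩` (the sets of variables and
of actions are the types `VB`, `VN`, `A`). -/
structure Problem (VB VN A : Type) where
  acts : A → Act VB VN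
  init : PState VB VN
  goals : List (Formula VB VN)

def Problem.goalSat {VB VN A : Type} [Fintype VN] (P : Problem VB VN A)
    (β : VB → Bool) (ν : VN → ℚ) : Prop :=
  ∀ f ∈ P.goals, f.holds β ν

/-- `α` is a valid plan for `P`. -/
def Problem.isPlan {VB VN A : Type} [Fintype VN] (P : Problem VB VN A) (α : List A) : Prop :=
  ∃ s, execSeq P.acts α P.init = some s ∧ P.goalSat s.boolVal s.numVal

def Problem.hasPlan {VB VN A : Type} [Fintype VN] (P : Problem VB VN A) : Prop :=
  ∃ α, P.isPlan α

/-! ## ψ[a] : rolled substitution -/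

/-- Value of the variable `x` in `ψ[a]` when the action variable of `a` takes value `k`:
`x + (k-1)·ψ₁` for a linear increment `x += ψ₁`, `ψ₁` for a simple assignment `x := ψ₁`,
`x` otherwise. -/
noncomputable def rolledVarVal {VB VN : Type} [Fintype VN] (a : Act VB VN) (k : ℕ)
    (ν : VN → ℚ) (x : VN) : ℚ :=
  match a.effN x with
  | none => ν x
  | some e =>
      if a.isIncr x e then ν x + ((k : ℚ) - 1) * (incrPart e x).eval ν
      else if a.isSimpleA e then e.eval ν
      else ν x

/-- Value of `ψ[a]` under `ν` when the action variable of `a` takes the value `k`. -/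
noncomputable def rolledEval {VB VN : Type} [Fintype VN] (a : Act VB VN) (k : ℕ)
    (ψ : LinExpr VN) (ν : VN → ℚ) : ℚ :=
  (∑ x, ψ.coeff x * rolledVarVal a k ν x) + ψ.const

/-! ## The rolled-up encoding Π^R and the standard encoding Π^S -/

def occursInPre {VB VN : Type} (a : Act VB VN) (x : VN) : Prop :=
  ∃ c ∈ a.preN, c.expr.coeff x ≠ 0

def occursInEff {VB VN : Type} (a : Act VB VN) (x : VN) : Prop :=
  a.assignsN x ∨ ∃ y e, a.effN y = some e ∧ e.coeff x ≠ 0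

/-- Condition under which `mutex^R(A)` contains `a₁ = 0 ∨ a₂ = 0`. -/
def mutexCond {VB VN : Type} (a₁ a₂ : Act VB VN) : Prop :=
  (∃ v, PropCond.isFalse v ∈ a₁.preB ∧ a₂.effB v = some true) ∨
  (∃ v, PropCond.isTrue v ∈ a₁.preB ∧ a₂.effB v = some false) ∨
  (∃ x, a₁.assignsN x ∧ (occursInEff a₂ x ∨ occursInPre a₂ x))

/-- The symbolic transition relation `T^R(X,A,X')` of the rolled-up encoding, as a
predicate on the values `β,ν` for `X`, `u` for the (ℕ-valued) action variables `A`,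
and `β',ν'` for `X'`. -/
def TR {VB VN A : Type} [Fintype VN] (P : Problem VB VN A)
    (β : VB → Bool) (ν : VN → ℚ) (u : A → ℕ) (β' : VB → Bool) (ν' : VN → ℚ) : Prop :=
  -- pre^R(A)
  (∀ a, 0 < u a →
    (∀ v, PropCond.isFalse v ∈ (P.acts a).preB → β v = false) ∧
    (∀ v, PropCond.isTrue v ∈ (P.acts a).preB → β v = true) ∧
    (∀ c ∈ (P.acts a).preN, c.op.holds (c.expr.eval ν))) ∧
  (∀ a, 1 < u a → ∀ c ∈ (P.acts a).preN,
    c.op.holds (rolledEval (P.acts a) (u a) c.expr ν)) ∧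
  -- eff^R(A)
  (∀ a, 0 < u a →
    (∀ v b, (P.acts a).effB v = some b → β' v = b) ∧
    (∀ x e, (P.acts a).effN x = some e →
      ((P.acts a).isIncr x e → ν' x = ν x + (u a : ℚ) * (incrPart e x).eval ν) ∧
      (¬ (P.acts a).isIncr x e → ν' x = e.eval ν))) ∧
  -- frame^R(V_B ∪ V_N)
  (∀ v, (∀ a, (P.acts a).assignsB v → u a = 0) → β' v = β v) ∧
  (∀ x, (∀ a, (P.acts a).assignsN x → u a = 0) → ν' x = ν x) ∧
  -- mutex^R(A)
  (∀ a₁ a₂, a₁ ≠ a₂ → mutexCond (P.acts a₁) (P.acts a₂) → u a₁ = 0 ∨ u a₂ = 0) ∧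
  -- amo^R(A)
  (∀ a, ¬ (P.acts a).eligible → u a ≤ 1)

/-- The symbolic transition relation `T^S` of the standard encoding: `T^R` plus
`a = 0 ∨ a = 1` for every action. -/
def TS {VB VN A : Type} [Fintype VN] (P : Problem VB VN A)
    (β : VB → Bool) (ν : VN → ℚ) (u : A → ℕ) (β' : VB → Bool) (ν' : VN → ℚ) : Prop :=
  TR P β ν u β' ν' ∧ ∀ a, u a ≤ 1

/-- A (candidate) model of `Π^R_n` / `Π^S_n` : values for the `n+1` copies of the state
variables and the `n` copies of the ℕ-valued action variables. -/
structure RModel (VB VN A : Type) (n : ℕ) where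
  β : Fin (n + 1) → VB → Bool
  ν : Fin (n + 1) → VN → ℚ
  u : Fin n → A → ℕ

def RModel.validWith {VB VN A : Type} {n : ℕ} [Fintype VN] (m : RModel VB VN A n)
    (P : Problem VB VN A)
    (T : (VB → Bool) → (VN → ℚ) → (A → ℕ) → (VB → Bool) → (VN → ℚ) → Prop) : Prop :=
  m.β 0 = P.init.boolVal ∧ m.ν 0 = P.init.numVal ∧
  (∀ i : Fin n, T (m.β i.castSucc) (m.ν i.castSucc) (m.u i) (m.β i.succ) (m.ν i.succ)) ∧
  P.goalSat (m.β (Fin.last n)) (m.ν (Fin.last n))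

/-- `m` is a model of `Π^R_n`. -/
def RModel.validR {VB VN A : Type} {n : ℕ} [Fintype VN] (m : RModel VB VN A n)
    (P : Problem VB VN A) : Prop :=
  m.validWith P (TR P)

/-- `m` is a model of `Π^S_n`. -/
def RModel.validS {VB VN A : Type} {n : ℕ} [Fintype VN] (m : RModel VB VN A n)
    (P : Problem VB VN A) : Prop :=
  m.validWith P (TS P)

/-- The decoding of the rolled-up/standard encoding: the sequences in which each
action `a` occurs `u a` times consecutively. -/
def decodesRolled {A : Type} (u : A → ℕ) (α : List A) : Prop :=
  ∃ l : List A, l.Nodup ∧ (∀ a, a ∈ l) ∧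
    α = l.flatMap (fun a => List.replicate (u a) a)

/-- The sequences of actions associated to the model `m` of `Π^R_n`/`Π^S_n`
(the set `(Π^R_n)⁻¹` is the union of `m.plans` over the models `m`). -/
def RModel.plans {VB VN A : Type} {n : ℕ} (m : RModel VB VN A n) (α : List A) : Prop :=
  ∃ αs : Fin n → List A, (∀ i, decodesRolled (m.u i) (αs i)) ∧ α = (List.ofFn αs).flatten

/-- `Π^R_n` is satisfiable. -/
def satR {VB VN A : Type} [Fintype VN] (P : Problem VB VN A) (n : ℕ) : Prop :=
  ∃ m : RModel VB VN A n, m.validR P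

/-- `Π^S_n` is satisfiable. -/
def satS {VB VN A : Type} [Fintype VN] (P : Problem VB VN A) (n : ℕ) : Prop :=
  ∃ m : RModel VB VN A n, m.validS P

/-! ## The R²∃ <-encoding Π^< -/

/-- Value of `v^{≪,·}` after chaining through the actions of `l`:
the last auxiliary variable of an action of `l` assigning `v`, else the initial value. -/
noncomputable def chainB {VB VN A : Type} (acts : A → Act VB VN) (l : List A)
    (β : VB → Bool) (aux : A → VB → Bool) (v : VB) : Bool :=
  l.foldl (fun val b => if ((acts b).effB v).isSome then aux b v else val) (β v)

noncomputable def chainN {VB VN A : Type} (acts : A → Act VB VN) (l : List A)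
    (ν : VN → ℚ) (aux : A → VN → ℚ) (x : VN) : ℚ :=
  l.foldl (fun val b => if ((acts b).effN x).isSome then aux b x else val) (ν x)

/-- The actions strictly preceding `a` in the total order `ord`. -/
noncomputable def before {A : Type} (ord : List A) (a : A) : List A :=
  ord.takeWhile (fun b => decide (b ≠ a))

/-- The symbolic transition relation `T^<(X,A,X')` of the R²∃ `<`-encoding.
`actb` gives the values of the Boolean action variables, `auxB`/`auxN` the values of the
fresh state variables `v^a`. -/
def Tlt {VB VN A : Type} [Fintype VN] (P : Problem VB VN A) (ord : List A)
    (β : VB → Bool) (ν : VN → ℚ) (actb : A → Bool)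
    (auxB : A → VB → Bool) (auxN : A → VN → ℚ)
    (β' : VB → Bool) (ν' : VN → ℚ) : Prop :=
  -- pre^<(A)
  (∀ a, actb a = true →
    (∀ v, PropCond.isFalse v ∈ (P.acts a).preB →
      chainB P.acts (before ord a) β auxB v = false) ∧
    (∀ v, PropCond.isTrue v ∈ (P.acts a).preB →
      chainB P.acts (before ord a) β auxB v = true) ∧
    (∀ c ∈ (P.acts a).preN,
      c.op.holds (c.expr.eval (chainN P.acts (before ord a) ν auxN)))) ∧
  -- eff^<(A)
  (∀ a v b, (P.acts a).effB v = some b →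
    (actb a = true → auxB a v = b) ∧
    (actb a = false → auxB a v = chainB P.acts (before ord a) β auxB v)) ∧
  (∀ a x e, (P.acts a).effN x = some e →
    (actb a = true → auxN a x = e.eval (chainN P.acts (before ord a) ν auxN)) ∧
    (actb a = false → auxN a x = chainN P.acts (before ord a) ν auxN x)) ∧
  -- frame^<(V_B ∪ V_N)
  (∀ v, β' v = chainB P.acts ord β auxB v) ∧
  (∀ x, ν' x = chainN P.acts ord ν auxN x)

/-- A (candidate) model of `Π^<_n`. -/
structure LtModel (VB VN A : Type) (n : ℕ) where
  β : Fin (n + 1) → VB → Bool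
  ν : Fin (n + 1) → VN → ℚ
  actb : Fin n → A → Bool
  auxB : Fin n → A → VB → Bool
  auxN : Fin n → A → VN → ℚ

def LtModel.valid {VB VN A : Type} {n : ℕ} [Fintype VN] (m : LtModel VB VN A n)
    (P : Problem VB VN A) (ord : List A) : Prop :=
  m.β 0 = P.init.boolVal ∧ m.ν 0 = P.init.numVal ∧
  (∀ i : Fin n, Tlt P ord (m.β i.castSucc) (m.ν i.castSucc) (m.actb i)
      (m.auxB i) (m.auxN i) (m.β i.succ) (m.ν i.succ)) ∧
  P.goalSat (m.β (Fin.last n)) (m.ν (Fin.last n))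

/-- The plan decoded from a model of `Π^<_n`: at each step, the actions of `ord`
whose Boolean action variable is true, in the order of `ord`. -/
def LtModel.plan {VB VN A : Type} {n : ℕ} (m : LtModel VB VN A n) (ord : List A) : List A :=
  (List.ofFn fun i : Fin n => ord.filter (m.actb i)).flatten

/-- `Π^<_n` is satisfiable. -/
def satLt {VB VN A : Type} [Fintype VN] (P : Problem VB VN A) (ord : List A) (n : ℕ) : Prop :=
  ∃ m : LtModel VB VN A n, m.valid P ord

/-! ## The pattern ≺-encoding Π^≺ -/

/-- `σ^{≺₁}(v)` for Boolean `v`, where `≺₁` is the prefix of `pat` of length `j`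
(`act j` is the value of the action variable of the `j`-th occurrence in the pattern). -/
noncomputable def sigB {VB VN A : Type} (acts : A → Act VB VN) (pat : List A)
    (act : ℕ → ℕ) (β : VB → Bool) : ℕ → VB → Bool
  | 0 => β
  | j + 1 => fun v =>
      match pat[j]? with
      | none => sigB acts pat act β j v
      | some a =>
          match (acts a).effB v with
          | some true => sigB acts pat act β j v || decide (0 < act j)
          | some false => sigB acts pat act β j v && decide (act j = 0)
          | none => sigB acts pat act β j v

/-- `σ^{≺₁}(x)` for numeric `x` (`aux j` gives the values of the fresh variables
`x^{≺₁;a}` introduced for the general assignments of the `j`-th occurrence). -/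
noncomputable def sigN {VB VN A : Type} [Fintype VN] (acts : A → Act VB VN) (pat : List A)
    (act : ℕ → ℕ) (aux : ℕ → VN → ℚ) (ν : VN → ℚ) : ℕ → VN → ℚ
  | 0 => ν
  | j + 1 => fun x =>
      match pat[j]? with
      | none => sigN acts pat act aux ν j x
      | some a =>
          match (acts a).effN x with
          | none => sigN acts pat act aux ν j x
          | some e =>
              if (acts a).isIncr x e then
                sigN acts pat act aux ν j x +
                  (act j : ℚ) * (incrPart e x).eval (sigN acts pat act aux ν j)
              else aux j x

/-- The symbolic transition relation `T^≺(X,A,X')` of the pattern `≺`-encoding. -/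
def Tpat {VB VN A : Type} [Fintype VN] (P : Problem VB VN A) (pat : List A)
    (β : VB → Bool) (ν : VN → ℚ) (act : ℕ → ℕ) (aux : ℕ → VN → ℚ)
    (β' : VB → Bool) (ν' : VN → ℚ) : Prop :=
  (∀ (j : ℕ) (hj : j < pat.length),
    -- pre^≺(A)
    (∀ v, PropCond.isFalse v ∈ (P.acts (pat.get ⟨j, hj⟩)).preB → 0 < act j →
      sigB P.acts pat act β j v = false) ∧
    (∀ v, PropCond.isTrue v ∈ (P.acts (pat.get ⟨j, hj⟩)).preB → 0 < act j →
      sigB P.acts pat act β j v = true) ∧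
    (∀ c ∈ (P.acts (pat.get ⟨j, hj⟩)).preN,
      (0 < act j → c.op.holds (c.expr.eval (sigN P.acts pat act aux ν j))) ∧
      (1 < act j → c.op.holds
        (rolledEval (P.acts (pat.get ⟨j, hj⟩)) (act j) c.expr (sigN P.acts pat act aux ν j)))) ∧
    -- eff^≺(A) (for the general assignments)
    (∀ x e, (P.acts (pat.get ⟨j, hj⟩)).effN x = some e →
      ¬ (P.acts (pat.get ⟨j, hj⟩)).isIncr x e →
      (act j = 0 → aux j x = sigN P.acts pat act aux ν j x) ∧
      (0 < act j → aux j x = e.eval (sigN P.acts pat act aux ν j))) ∧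
    -- amo^≺(A)
    (¬ (P.acts (pat.get ⟨j, hj⟩)).eligible → act j ≤ 1)) ∧
  -- frame^≺(V_B ∪ V_N)
  (∀ v, β' v = sigB P.acts pat act β pat.length v) ∧
  (∀ x, ν' x = sigN P.acts pat act aux ν pat.length x)

/-- The sequence decoded from the values `act` of the action variables of the pattern:
the `j`-th occurrence repeated `act j` times, in the order of the pattern. -/
def decodePat {A : Type} (pat : List A) (act : ℕ → ℕ) : List A :=
  (List.ofFn fun j : Fin pat.length => List.replicate (act j.val) (pat.get j)).flatten

/-- A (candidate) model of `Π^≺_n`. -/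
structure PatModel (VB VN A : Type) (n : ℕ) where
  β : Fin (n + 1) → VB → Bool
  ν : Fin (n + 1) → VN → ℚ
  act : Fin n → ℕ → ℕ
  aux : Fin n → ℕ → VN → ℚ

def PatModel.valid {VB VN A : Type} {n : ℕ} [Fintype VN] (m : PatModel VB VN A n)
    (P : Problem VB VN A) (pat : List A) : Prop :=
  m.β 0 = P.init.boolVal ∧ m.ν 0 = P.init.numVal ∧
  (∀ i : Fin n, Tpat P pat (m.β i.castSucc) (m.ν i.castSucc) (m.act i) (m.aux i)
      (m.β i.succ) (m.ν i.succ)) ∧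
  P.goalSat (m.β (Fin.last n)) (m.ν (Fin.last n))

/-- The plan decoded from a model of `Π^≺_n`. -/
def PatModel.plan {VB VN A : Type} {n : ℕ} (m : PatModel VB VN A n) (pat : List A) : List A :=
  (List.ofFn fun i : Fin n => decodePat pat (m.act i)).flatten

/-- `Π^≺_n` is satisfiable. -/
def satPat {VB VN A : Type} [Fintype VN] (P : Problem VB VN A) (pat : List A) (n : ℕ) : Prop :=
  ∃ m : PatModel VB VN A n, m.valid P pat

/-! ## Abstract encodings -/

/-- An abstract encoding `Π^E = ⟨X, A, I(X), T(X,A,X'), G(X)⟩` of a problem: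
`XAsgn` is the type of assignments to the state variables `X ⊇ V_B ∪ V_N`
(with projections giving the values of the variables of `V_B ∪ V_N`), `AAsgn` the type
of assignments to the action variables, `T` the symbolic transition relation and
`decode` its decoding function, associating at least one action sequence to each model. -/
structure Encoding (VB VN A : Type) where
  XAsgn : Type
  AAsgn : Type
  projB : XAsgn → VB → Bool
  projN : XAsgn → VN → ℚ
  T : XAsgn → AAsgn → XAsgn → Prop
  decode : XAsgn → AAsgn → XAsgn → List A → Prop
  decode_exists : ∀ x u x', T x u x' → ∃ α, decode x u x' α

def Encoding.stateOf {VB VN A : Type} (E : Encoding VB VN A) (x : E.XAsgn) : PState VB VN :=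
  ⟨E.projB x, E.projN x⟩

/-- The symbolic transition relation of `E` is correct: every action sequence
corresponding to a model of `T` is executable in the state given by the model and
leads to the state given by the primed variables. -/
def Encoding.correctT {VB VN A : Type} [Fintype VN] (E : Encoding VB VN A)
    (P : Problem VB VN A) : Prop :=
  ∀ x u x', E.T x u x' → ∀ α, E.decode x u x' α →
    execSeq P.acts α (E.stateOf x) = some (E.stateOf x')

/-- A (candidate) model of `Π^E_n`. -/
structure EncModel {VB VN A : Type} (E : Encoding VB VN A) (n : ℕ) where
  xs : Fin (n + 1) → E.XAsgn
  us : Fin n → E.AAsgn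

def EncModel.valid {VB VN A : Type} [Fintype VN] {E : Encoding VB VN A} {n : ℕ}
    (m : EncModel E n) (P : Problem VB VN A) : Prop :=
  E.projB (m.xs 0) = P.init.boolVal ∧ E.projN (m.xs 0) = P.init.numVal ∧
  (∀ i : Fin n, E.T (m.xs i.castSucc) (m.us i) (m.xs i.succ)) ∧
  P.goalSat (E.projB (m.xs (Fin.last n))) (E.projN (m.xs (Fin.last n)))

/-- The action sequences associated to a model of `Π^E_n`
(`(Π^E_n)⁻¹` is the union of `m.plans` over the models `m` of `Π^E_n`). -/
def EncModel.plans {VB VN A : Type} {E : Encoding VB VN A} {n : ℕ}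
    (m : EncModel E n) (α : List A) : Prop :=
  ∃ αs : Fin n → List A,
    (∀ i, E.decode (m.xs i.castSucc) (m.us i) (m.xs i.succ) (αs i)) ∧
    α = (List.ofFn αs).flatten

/-- The quantity `Δ` for an action `a` and an expression `ψ`: the sum, over the linear
increments `x += ψ₁` of `a` with `x` occurring in `ψ`, of `ψ₁` weighted by the coefficient
of `x` in `ψ`. -/
noncomputable def deltaVal {VB VN : Type} [Fintype VN] (a : Act VB VN)
    (ψ : LinExpr VN) (ν : VN → ℚ) : ℚ :=
  ∑ x, ψ.coeff x *
    (match a.effN x with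
     | some e => if a.isIncr x e then (incrPart e x).eval ν else 0
     | none => 0)

/-! ## Auxiliary lemmas for the proof -/

private lemma evalCongr {VN : Type} [Fintype VN] (e : LinExpr VN) {ν₁ ν₂ : VN → ℚ}
    (h : ∀ x, e.coeff x ≠ 0 → ν₁ x = ν₂ x) : e.eval ν₁ = e.eval ν₂ := by
  unfold LinExpr.eval
  congr 1
  refine Finset.sum_congr rfl fun x _ => ?_
  by_cases hx : e.coeff x = 0
  · simp [hx]
  · rw [h x hx]

private lemma incrPart_eval_eq {VN : Type} [Fintype VN] (e : LinExpr VN) (x : VN) (ν : VN → ℚ)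
    (hx : e.coeff x = 1) : (incrPart e x).eval ν = e.eval ν - ν x := by
  unfold incrPart LinExpr.eval
  have h : ∀ y, (Function.update e.coeff x 0) y * ν y
      = e.coeff y * ν y - (if y = x then e.coeff x * ν x else 0) := by
    intro y; by_cases hy : y = x
    · subst hy; simp
    · simp [Function.update_of_ne hy, hy]
  simp only [h]
  rw [Finset.sum_sub_distrib, Finset.sum_ite_eq' Finset.univ x]
  simp only [Finset.mem_univ, if_true, hx]
  ring

private lemma foldl_chain_spec {A γ : Type} (sets act : A → Bool) (aux : A → γ) (v0 v1 : γ) :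
    ∀ l : List A,
      (∀ l1 b l2, l = l1 ++ b :: l2 → sets b = true →
        aux b = if (act b || l1.any fun c => act c && sets c) then v1 else v0) →
      l.foldl (fun val b => if sets b then aux b else val) v0 =
        if (l.any fun c => act c && sets c) then v1 else v0 := by
  intro l
  induction l using List.reverseRecOn with
  | nil => intro _; simp
  | append_singleton l b ih =>
    intro h
    rw [List.foldl_append]
    simp only [List.foldl_cons, List.foldl_nil]
    have ihl := ih (fun l1 b' l2 hd hs => h l1 b' (l2 ++ [b]) (by rw [hd]; simp) hs)
    by_cases hb : sets b = true
    · have hab := h l b [] rfl hb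
      rw [if_pos hb, hab, List.any_append]
      simp [hb, Bool.or_comm]
    · simp only [Bool.not_eq_true] at hb
      rw [hb, if_neg (by simp), ihl, List.any_append]
      simp [hb]

private lemma before_eq' {A : Type} {ord l1 l2 : List A} {b : A} (hnd : ord.Nodup)
    (h : ord = l1 ++ b :: l2) : before ord b = l1 := by
  subst h
  unfold before
  induction l1 with
  | nil => simp [List.takeWhile_cons]
  | cons a t ih =>
    obtain ⟨ha, hnd'⟩ := List.nodup_cons.mp hnd
    have hab : a ≠ b := fun he => ha (he ▸ (by simp : b ∈ t ++ b :: l2))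
    rw [List.cons_append, List.takeWhile_cons_of_pos (by simp [hab]), ih hnd']

private lemma mem_before_ne {A : Type} {ord : List A} {a c : A} (h : c ∈ before ord a) :
    c ≠ a := by
  unfold before at h
  simpa using List.mem_takeWhile_imp h

private lemma before_append {A : Type} (ord : List A) (a : A) :
    ∃ t, ord = before ord a ++ t := by
  refine ⟨ord.dropWhile (fun b => decide (b ≠ a)), ?_⟩
  unfold before
  exact (List.takeWhile_append_dropWhile).symm

/-- The value of the fresh variable `v^a` constructed from a model of `Π^S_n`. -/
noncomputable def mkAuxB {VB VN A : Type} (P : Problem VB VN A) (ord : List A)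
    (β : VB → Bool) (u : A → ℕ) (β' : VB → Bool) (a : A) (v : VB) : Bool :=
  if ((before ord a ++ [a]).any fun c => decide (u c ≠ 0) && ((P.acts c).effB v).isSome)
  then β' v else β v

/-- The value of the fresh variable `x^a` constructed from a model of `Π^S_n`. -/
noncomputable def mkAuxN {VB VN A : Type} (P : Problem VB VN A) (ord : List A)
    (ν : VN → ℚ) (u : A → ℕ) (ν' : VN → ℚ) (a : A) (x : VN) : ℚ :=
  if ((before ord a ++ [a]).any fun c => decide (u c ≠ 0) && ((P.acts c).effN x).isSome)
  then ν' x else ν x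

private lemma chainB_mk {VB VN A : Type} (P : Problem VB VN A) {ord : List A}
    (hnd : ord.Nodup) (β : VB → Bool) (u : A → ℕ) (β' : VB → Bool) (v : VB)
    {l t : List A} (hlt : ord = l ++ t) :
    chainB P.acts l β (mkAuxB P ord β u β') v =
      if (l.any fun c => decide (u c ≠ 0) && ((P.acts c).effB v).isSome)
      then β' v else β v := by
  refine foldl_chain_spec (fun b => ((P.acts b).effB v).isSome)
      (fun c => decide (u c ≠ 0)) (fun b => mkAuxB P ord β u β' b v) (β v) (β' v) l ?_
  intro l1 b l2 hd hs
  have hb : before ord b = l1 := before_eq' hnd (by rw [hlt, hd, List.append_assoc]; rfl)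
  beta_reduce
  unfold mkAuxB
  rw [hb, List.any_append]
  simp [hs, Bool.or_comm]

private lemma chainN_mk {VB VN A : Type} (P : Problem VB VN A) {ord : List A}
    (hnd : ord.Nodup) (ν : VN → ℚ) (u : A → ℕ) (ν' : VN → ℚ) (x : VN)
    {l t : List A} (hlt : ord = l ++ t) :
    chainN P.acts l ν (mkAuxN P ord ν u ν') x =
      if (l.any fun c => decide (u c ≠ 0) && ((P.acts c).effN x).isSome)
      then ν' x else ν x := by
  refine foldl_chain_spec (fun b => ((P.acts b).effN x).isSome)
      (fun c => decide (u c ≠ 0)) (fun b => mkAuxN P ord ν u ν' b x) (ν x) (ν' x) l ?_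
  intro l1 b l2 hd hs
  have hb : before ord b = l1 := before_eq' hnd (by rw [hlt, hd, List.append_assoc]; rfl)
  beta_reduce
  unfold mkAuxN
  rw [hb, List.any_append]
  simp [hs, Bool.or_comm]

private lemma step_Tlt {VB VN A : Type} [Fintype VN] (P : Problem VB VN A) {ord : List A}
    (hnd : ord.Nodup) (hall : ∀ a, a ∈ ord)
    {β : VB → Bool} {ν : VN → ℚ} {u : A → ℕ} {β' : VB → Bool} {ν' : VN → ℚ}
    (hTR : TR P β ν u β' ν') (hle : ∀ a, u a ≤ 1) :
    Tlt P ord β ν (fun a => decide (u a ≠ 0)) (mkAuxB P ord β u β') (mkAuxN P ord ν u ν')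
      β' ν' := by
  obtain ⟨hpre, _hpre2, heff, hframeB, hframeN, hmutex, _⟩ := hTR
  have hchB : ∀ a v, chainB P.acts (before ord a) β (mkAuxB P ord β u β') v =
      if ((before ord a).any fun c => decide (u c ≠ 0) && ((P.acts c).effB v).isSome)
      then β' v else β v := by
    intro a v
    obtain ⟨t, ht⟩ := before_append ord a
    exact chainB_mk P hnd β u β' v ht
  have hchN : ∀ a x, chainN P.acts (before ord a) ν (mkAuxN P ord ν u ν') x =
      if ((before ord a).any fun c => decide (u c ≠ 0) && ((P.acts c).effN x).isSome)
      then ν' x else ν x := by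
    intro a x
    obtain ⟨t, ht⟩ := before_append ord a
    exact chainN_mk P hnd ν u ν' x ht
  have factN : ∀ a, u a ≠ 0 → ∀ x,
      (occursInEff (P.acts a) x ∨ occursInPre (P.acts a) x) →
      chainN P.acts (before ord a) ν (mkAuxN P ord ν u ν') x = ν x := by
    intro a ha x hx
    rw [hchN a x, if_neg]
    intro hb
    simp only [List.any_eq_true, Bool.and_eq_true, decide_eq_true_eq,
      Option.isSome_iff_ne_none] at hb
    obtain ⟨c, hc, hc1, hc2⟩ := hb
    have hca : c ≠ a := mem_before_ne hc
    rcases hmutex c a hca (Or.inr (Or.inr ⟨x, hc2, hx⟩)) with h | h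
    · exact hc1 h
    · exact ha h
  have factNeval : ∀ a, u a ≠ 0 → ∀ e : LinExpr VN,
      (∀ x, e.coeff x ≠ 0 → occursInEff (P.acts a) x ∨ occursInPre (P.acts a) x) →
      e.eval (chainN P.acts (before ord a) ν (mkAuxN P ord ν u ν')) = e.eval ν :=
    fun a ha e he => evalCongr e (fun x hx => factN a ha x (he x hx))
  refine ⟨?_, ?_, ?_, ?_, ?_⟩
  · -- pre^<
    intro a ha
    simp only [decide_eq_true_eq] at ha
    have hpos : 0 < u a := Nat.pos_of_ne_zero ha
    obtain ⟨hp1, hp2, hp3⟩ := hpre a hpos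
    refine ⟨?_, ?_, ?_⟩
    · intro v hv
      rw [hchB a v]
      by_cases hb : ((before ord a).any fun c =>
          decide (u c ≠ 0) && ((P.acts c).effB v).isSome) = true
      · rw [if_pos hb]
        simp only [List.any_eq_true, Bool.and_eq_true, decide_eq_true_eq,
          Option.isSome_iff_ne_none] at hb
        obtain ⟨c, hc, hc1, hc2⟩ := hb
        obtain ⟨b, hb'⟩ := Option.ne_none_iff_exists'.mp hc2
        cases b with
        | true =>
          rcases hmutex a c (fun h => mem_before_ne hc h.symm) (Or.inl ⟨v, hv, hb'⟩) with h | h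
          · exact absurd h ha
          · exact absurd h hc1
        | false => exact (heff c (Nat.pos_of_ne_zero hc1)).1 v false hb'
      · rw [if_neg hb]; exact hp1 v hv
    · intro v hv
      rw [hchB a v]
      by_cases hb : ((before ord a).any fun c =>
          decide (u c ≠ 0) && ((P.acts c).effB v).isSome) = true
      · rw [if_pos hb]
        simp only [List.any_eq_true, Bool.and_eq_true, decide_eq_true_eq,
          Option.isSome_iff_ne_none] at hb
        obtain ⟨c, hc, hc1, hc2⟩ := hb
        obtain ⟨b, hb'⟩ := Option.ne_none_iff_exists'.mp hc2
        cases b with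
        | false =>
          rcases hmutex a c (fun h => mem_before_ne hc h.symm)
            (Or.inr (Or.inl ⟨v, hv, hb'⟩)) with h | h
          · exact absurd h ha
          · exact absurd h hc1
        | true => exact (heff c (Nat.pos_of_ne_zero hc1)).1 v true hb'
      · rw [if_neg hb]; exact hp2 v hv
    · intro c hc
      rw [factNeval a ha c.expr (fun x hx => Or.inr ⟨c, hc, hx⟩)]
      exact hp3 c hc
  · -- eff^< Boolean
    intro a v b hvb
    constructor
    · intro ha
      simp only [decide_eq_true_eq] at ha
      have haux : mkAuxB P ord β u β' a v = β' v := by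
        unfold mkAuxB
        rw [if_pos]
        rw [List.any_append]
        simp [ha, hvb]
      rw [haux]
      exact (heff a (Nat.pos_of_ne_zero ha)).1 v b hvb
    · intro ha
      simp only [decide_eq_false_iff_not, ne_eq, not_not] at ha
      rw [hchB a v]
      unfold mkAuxB
      rw [List.any_append]
      simp [ha]
  · -- eff^< numeric
    intro a x e hxe
    constructor
    · intro ha
      simp only [decide_eq_true_eq] at ha
      have hpos : 0 < u a := Nat.pos_of_ne_zero ha
      have haux : mkAuxN P ord ν u ν' a x = ν' x := by
        unfold mkAuxN
        rw [if_pos]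
        rw [List.any_append]
        simp [ha, hxe]
      rw [haux, factNeval a ha e (fun y hy => Or.inl (Or.inr ⟨x, e, hxe, hy⟩))]
      have h2 := (heff a hpos).2 x e hxe
      by_cases hinc : (P.acts a).isIncr x e
      · have hu1 : u a = 1 := le_antisymm (hle a) (Nat.one_le_iff_ne_zero.mpr ha)
        rw [h2.1 hinc, hu1, incrPart_eval_eq e x ν hinc.1]
        push_cast
        ring
      · exact h2.2 hinc
    · intro ha
      simp only [decide_eq_false_iff_not, ne_eq, not_not] at ha
      rw [hchN a x]
      unfold mkAuxN
      rw [List.any_append]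
      simp [ha]
  · -- frame^< Boolean
    intro v
    rw [chainB_mk P hnd β u β' v (l := ord) (t := []) (by simp)]
    by_cases h : (ord.any fun c => decide (u c ≠ 0) && ((P.acts c).effB v).isSome) = true
    · rw [if_pos h]
    · rw [if_neg h]
      apply hframeB v
      intro c hc
      by_contra hc0
      apply h
      simp only [List.any_eq_true, Bool.and_eq_true, decide_eq_true_eq,
        Option.isSome_iff_ne_none]
      exact ⟨c, hall c, hc0, hc⟩
  · -- frame^< numeric
    intro x
    rw [chainN_mk P hnd ν u ν' x (l := ord) (t := []) (by simp)]
    by_cases h : (ord.any fun c => decide (u c ≠ 0) && ((P.acts c).effN x).isSome) = true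
    · rw [if_pos h]
    · rw [if_neg h]
      apply hframeN x
      intro c hc
      by_contra hc0
      apply h
      simp only [List.any_eq_true, Bool.and_eq_true, decide_eq_true_eq,
        Option.isSome_iff_ne_none]
      exact ⟨c, hall c, hc0, hc⟩

private lemma filter_eq_flatMap {A : Type} (u : A → ℕ) (hle : ∀ a, u a ≤ 1) :
    ∀ l : List A, l.filter (fun a => decide (u a ≠ 0)) =
      l.flatMap (fun a => List.replicate (u a) a) := by
  intro l
  induction l with
  | nil => simp
  | cons a t ih =>
    rw [List.filter_cons, List.flatMap_cons, ← ih]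
    rcases Nat.le_one_iff_eq_zero_or_eq_one.mp (hle a) with h | h <;> simp [h]

/-- for every total order `<` of the actions, the R²∃ `<`-encoding `Π^<`
dominates the standard encoding `Π^S`; moreover, from any model of `Π^S_n` one can
define a model of `Π^<_n` with the same corresponding plan. -/
theorem r2e_dominates_standard
    {VB VN A : Type} [Fintype VB] [Fintype VN] [Fintype A]
    (P : Problem VB VN A) (ord : List A) (hnd : ord.Nodup) (hall : ∀ a : A, a ∈ ord)
    (n : ℕ) :
    (satS P n → satLt P ord n) ∧
    (∀ mS : RModel VB VN A n, mS.validS P →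
      ∃ mL : LtModel VB VN A n, mL.valid P ord ∧ mS.plans (mL.plan ord)) := by
  have main : ∀ mS : RModel VB VN A n, mS.validS P →
      ∃ mL : LtModel VB VN A n, mL.valid P ord ∧ mS.plans (mL.plan ord) := by
    intro mS hS
    obtain ⟨hb0, hn0, hT, hG⟩ := hS
    refine ⟨⟨mS.β, mS.ν, fun i a => decide (mS.u i a ≠ 0),
      fun i => mkAuxB P ord (mS.β i.castSucc) (mS.u i) (mS.β i.succ),
      fun i => mkAuxN P ord (mS.ν i.castSucc) (mS.u i) (mS.ν i.succ)⟩,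
      ⟨hb0, hn0, fun i => step_Tlt P hnd hall (hT i).1 (hT i).2, hG⟩, ?_⟩
    refine ⟨fun i => ord.filter (fun a => decide (mS.u i a ≠ 0)),
      fun i => ⟨ord, hnd, hall, filter_eq_flatMap (mS.u i) (hT i).2 ord⟩, ?_⟩
    rfl
  refine ⟨fun hs => ?_, main⟩
  obtain ⟨m, hm⟩ := hs
  obtain ⟨mL, h1, _⟩ := main m hm
  exact ⟨mL, h1⟩
end PatternPlanning
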